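/- (Discrete Hardy inequality) Let 1 ≤ p < ∞, σ < 0, and let (a_j)_{j≥0} be a sequence of nonnegative reals. Then ∑_{j=0}^∞ 2^{σj} (∑_{i=0}^j a_i)^p ≤ c ∑_{j=0}^∞ 2^{σj} a_j^p, where c depends only on p and σ. -/

import Mathlib

open MeasureTheory Set
open scoped ENNReal NNReal

noncomputable section

theorem hardy_pointwise (p δ : ℝ) (hp : 1 ≤ p) (hδ : 0 < δ)
    (a : ℕ → ℝ) (ha : ∀ j, 0 ≤ a j) (j : ℕ) :
    (∑ i ∈ Finset.range (j + 1), a i) ^ p ≤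
      ((2:ℝ) ^ δ / ((2:ℝ) ^ δ - 1)) ^ (p - 1) * (2:ℝ) ^ (δ * (p-1) * j) *
        ∑ i ∈ Finset.range (j + 1), (2:ℝ) ^ (-(δ * (p-1) * i)) * a i ^ p := by
  have hp0 : (0:ℝ) < p := lt_of_lt_of_le one_pos hp
  set x : ℝ := (2:ℝ) ^ δ with hxdef
  have hx1 : 1 < x := by
    rw [hxdef]
    exact Real.one_lt_rpow_iff_of_pos (by norm_num) |>.2 (Or.inl ⟨by norm_num, hδ⟩)
  have hx0 : 0 < x := lt_trans one_pos hx1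
  set W : ℝ := ∑ i ∈ Finset.range (j + 1), x ^ i with hWdef
  have hW : 0 < W := by
    rw [hWdef]
    exact Finset.sum_pos (fun i _ => pow_pos hx0 i) (by simp)
  -- convexity
  have key := Real.rpow_arith_mean_le_arith_mean_rpow (Finset.range (j+1))
      (fun i => x ^ i / W) (fun i => a i * W / x ^ i)
      (fun i _ => by positivity) ?_
      (fun i _ => div_nonneg (mul_nonneg (ha i) hW.le) (pow_pos hx0 i).le) hp
  · have hLHS : ∀ i, (x ^ i / W) * (a i * W / x ^ i) = a i := by
      intro i
      have h1 : W ≠ 0 := hW.ne'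
      have h2 : (x:ℝ) ^ i ≠ 0 := (pow_pos hx0 i).ne'
      field_simp
    have hterm : ∀ i, (x ^ i / W) * (a i * W / x ^ i) ^ p
        = a i ^ p * (W ^ (p-1) * (x ^ i : ℝ) ^ ((1:ℝ)-p)) := by
      intro i
      have h1 : W ≠ 0 := hW.ne'
      have h2 : ((x:ℝ) ^ i) ^ p ≠ 0 := (Real.rpow_pos_of_pos (pow_pos hx0 i) p).ne'
      rw [Real.div_rpow (mul_nonneg (ha i) hW.le) (pow_pos hx0 i).le,
        Real.mul_rpow (ha i) hW.le, Real.rpow_sub hW, Real.rpow_sub (pow_pos hx0 i),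
        Real.rpow_one, Real.rpow_one]
      field_simp
    -- identity for powers of x
    have hxpow : ∀ (i : ℕ) (q : ℝ), ((x : ℝ) ^ i) ^ q = (2:ℝ) ^ (δ * i * q) := by
      intro i q
      rw [hxdef, ← Real.rpow_natCast ((2:ℝ) ^ δ) i,
        ← Real.rpow_mul (by norm_num : (0:ℝ) ≤ 2),
        ← Real.rpow_mul (by norm_num : (0:ℝ) ≤ 2), mul_assoc]
    -- bound on W ^ (p-1)
    have hWb : W ^ (p-1) ≤ (x / (x - 1)) ^ (p-1) * (2:ℝ) ^ (δ * (p-1) * j) := by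
      have hx1' : x - 1 > 0 := by linarith
      have hWle : W ≤ (x / (x - 1)) * x ^ j := by
        rw [hWdef, geom_sum_eq hx1.ne' (j+1)]
        rw [div_le_iff₀ hx1']
        have : x ^ (j+1) - 1 ≤ x ^ (j+1) := by linarith
        calc x ^ (j+1) - 1 ≤ x ^ (j+1) := this
          _ = x / (x-1) * x ^ j * (x-1) := by field_simp; ring
      calc W ^ (p-1) ≤ ((x / (x - 1)) * x ^ j) ^ (p-1) :=
            Real.rpow_le_rpow hW.le hWle (by linarith)
        _ = (x / (x - 1)) ^ (p-1) * ((x:ℝ) ^ j) ^ (p-1) :=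
            Real.mul_rpow (by positivity) (pow_pos hx0 j).le
        _ = (x / (x - 1)) ^ (p-1) * (2:ℝ) ^ (δ * (p-1) * j) := by
            rw [hxpow j (p-1)]; ring_nf
    have hxib : ∀ i : ℕ, ((x:ℝ) ^ i) ^ ((1:ℝ)-p) = (2:ℝ) ^ (-(δ * (p-1) * i)) := by
      intro i
      rw [hxpow i (1-p)]; ring_nf
    calc (∑ i ∈ Finset.range (j + 1), a i) ^ p
        = (∑ i ∈ Finset.range (j + 1), (x ^ i / W) * (a i * W / x ^ i)) ^ p := by
          congr 1; exact Finset.sum_congr rfl fun i _ => (hLHS i).symm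
      _ ≤ ∑ i ∈ Finset.range (j + 1), (x ^ i / W) * (a i * W / x ^ i) ^ p := key
      _ = ∑ i ∈ Finset.range (j + 1), a i ^ p * (W ^ (p-1) * ((x:ℝ) ^ i) ^ ((1:ℝ)-p)) :=
          Finset.sum_congr rfl fun i _ => hterm i
      _ ≤ ∑ i ∈ Finset.range (j + 1),
            a i ^ p * (((x / (x - 1)) ^ (p-1) * (2:ℝ) ^ (δ * (p-1) * j)) *
              (2:ℝ) ^ (-(δ * (p-1) * i))) := by
          refine Finset.sum_le_sum fun i _ => ?_
          rw [hxib i]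
          refine mul_le_mul_of_nonneg_left ?_ (Real.rpow_nonneg (ha i) p)
          exact mul_le_mul_of_nonneg_right hWb (Real.rpow_nonneg (by norm_num) _)
      _ = (x / (x - 1)) ^ (p-1) * (2:ℝ) ^ (δ * (p-1) * j) *
            ∑ i ∈ Finset.range (j + 1), (2:ℝ) ^ (-(δ * (p-1) * i)) * a i ^ p := by
          rw [Finset.mul_sum]; exact Finset.sum_congr rfl fun i _ => by ring
  · rw [← Finset.sum_div, ← hWdef, div_self hW.ne']

theorem stmt2 (p σ : ℝ) (hp : 1 ≤ p) (hσ : σ < 0) :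
    ∃ c : ℝ, 0 < c ∧
      ∀ a : ℕ → ℝ, (∀ j, 0 ≤ a j) →
        ∑' j : ℕ, ENNReal.ofReal ((2 : ℝ) ^ (σ * j) * (∑ i ∈ Finset.range (j + 1), a i) ^ p)
          ≤ ENNReal.ofReal c * ∑' j : ℕ, ENNReal.ofReal ((2 : ℝ) ^ (σ * j) * a j ^ p) := by
  have hp0 : (0:ℝ) < p := lt_of_lt_of_le one_pos hp
  set δ : ℝ := -σ / (2 * p) with hδdef
  have hδ : 0 < δ := div_pos (by linarith) (by linarith)
  set τ : ℝ := δ * (p - 1) with hτdef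
  have hτ0 : 0 ≤ τ := mul_nonneg hδ.le (by linarith)
  have hστ : σ + τ < 0 := by
    have h1 : σ + τ = σ * (p + 1) / (2 * p) := by
      rw [hτdef, hδdef]; field_simp; ring
    rw [h1]
    exact div_neg_of_neg_of_pos (mul_neg_of_neg_of_pos hσ (by linarith)) (by linarith)
  set x : ℝ := (2:ℝ) ^ δ with hxdef
  have hx1 : 1 < x := by
    rw [hxdef]
    exact Real.one_lt_rpow_iff_of_pos (by norm_num) |>.2 (Or.inl ⟨by norm_num, hδ⟩)
  have hx0 : 0 < x := lt_trans one_pos hx1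
  set K : ℝ := (x / (x - 1)) ^ (p - 1) with hKdef
  have hK : 0 < K := Real.rpow_pos_of_pos (div_pos hx0 (by linarith)) _
  set t : ℝ := (2:ℝ) ^ (σ + τ) with htdef
  have ht0 : 0 < t := Real.rpow_pos_of_pos (by norm_num) _
  have ht1 : t < 1 := Real.rpow_lt_one_of_one_lt_of_neg (by norm_num) hστ
  refine ⟨K * (1 - t)⁻¹, mul_pos hK (inv_pos.2 (by linarith)), fun a ha => ?_⟩
  set r : ℝ≥0∞ := ENNReal.ofReal t with hrdef
  set b : ℕ → ℝ≥0∞ := fun i => ENNReal.ofReal ((2:ℝ) ^ (-(τ * i)) * a i ^ p) with hbdef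
  -- real pointwise estimate
  have hreal : ∀ j : ℕ, (2:ℝ) ^ (σ * j) * (∑ i ∈ Finset.range (j + 1), a i) ^ p ≤
      K * ∑ i ∈ Finset.range (j + 1), t ^ j * ((2:ℝ) ^ (-(τ * i)) * a i ^ p) := by
    intro j
    have h1 := hardy_pointwise p δ hp hδ a ha j
    have h2 : (2:ℝ) ^ (σ * j) * ((x / (x - 1)) ^ (p-1) * (2:ℝ) ^ (δ * (p-1) * j) *
        ∑ i ∈ Finset.range (j + 1), (2:ℝ) ^ (-(δ * (p-1) * i)) * a i ^ p)
        = K * ∑ i ∈ Finset.range (j + 1), t ^ j * ((2:ℝ) ^ (-(τ * i)) * a i ^ p) := by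
      rw [hKdef, Finset.mul_sum, Finset.mul_sum, Finset.mul_sum]
      refine Finset.sum_congr rfl fun i _ => ?_
      have h3 : (t:ℝ) ^ j = (2:ℝ) ^ ((σ + τ) * (j:ℝ)) := by
        rw [htdef, ← Real.rpow_natCast ((2:ℝ) ^ (σ+τ)) j,
          ← Real.rpow_mul (by norm_num : (0:ℝ) ≤ 2)]
      have h4 : (2:ℝ) ^ (σ * (j:ℝ)) * (2:ℝ) ^ (δ * (p-1) * (j:ℝ)) = (2:ℝ) ^ ((σ + τ) * (j:ℝ)) := by
        rw [← Real.rpow_add (by norm_num : (0:ℝ) < 2)]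
        congr 1
        rw [hτdef]; ring
      rw [h3, ← h4, hτdef]
      ring
    calc (2:ℝ) ^ (σ * j) * (∑ i ∈ Finset.range (j + 1), a i) ^ p
        ≤ (2:ℝ) ^ (σ * j) * ((x / (x - 1)) ^ (p-1) * (2:ℝ) ^ (δ * (p-1) * j) *
            ∑ i ∈ Finset.range (j + 1), (2:ℝ) ^ (-(δ * (p-1) * i)) * a i ^ p) :=
          mul_le_mul_of_nonneg_left h1 (Real.rpow_nonneg (by norm_num) _)
      _ = _ := h2
  -- lift to ENNReal, pointwise
  have hpt : ∀ j : ℕ,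
      ENNReal.ofReal ((2:ℝ) ^ (σ * j) * (∑ i ∈ Finset.range (j + 1), a i) ^ p) ≤
      ENNReal.ofReal K * ∑ i ∈ Finset.range (j + 1), r ^ j * b i := by
    intro j
    refine le_trans (ENNReal.ofReal_le_ofReal (hreal j)) (le_of_eq ?_)
    rw [ENNReal.ofReal_mul hK.le]
    congr 1
    rw [ENNReal.ofReal_sum_of_nonneg (fun i _ => mul_nonneg (pow_nonneg ht0.le j)
      (mul_nonneg (Real.rpow_nonneg (by norm_num) _) (Real.rpow_nonneg (ha i) p)))]
    refine Finset.sum_congr rfl fun i _ => ?_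
    rw [ENNReal.ofReal_mul (pow_nonneg ht0.le j), hrdef, hbdef, ENNReal.ofReal_pow ht0.le]
  -- sum over j
  have hstep1 : ∑' j : ℕ, ENNReal.ofReal ((2:ℝ) ^ (σ * j) *
        (∑ i ∈ Finset.range (j + 1), a i) ^ p) ≤
      ENNReal.ofReal K * ∑' j : ℕ, ∑ i ∈ Finset.range (j + 1), r ^ j * b i := by
    rw [← ENNReal.tsum_mul_left]
    exact ENNReal.tsum_le_tsum hpt
  -- rewrite inner finite sum as a tsum with indicator
  have hfin : ∀ j : ℕ, ∑ i ∈ Finset.range (j + 1), r ^ j * b i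
      = ∑' i : ℕ, (if i ≤ j then r ^ j * b i else 0) := by
    intro j
    rw [tsum_eq_sum (s := Finset.range (j+1))
      (fun i hi => by simp [Nat.lt_succ_iff.not.1 (Finset.mem_range.not.1 hi)])]
    exact Finset.sum_congr rfl fun i hi => by
      simp [Nat.lt_succ_iff.1 (Finset.mem_range.1 hi)]
  -- geometric tail sum
  have hinner : ∀ i : ℕ, ∑' j : ℕ, (if i ≤ j then (r:ℝ≥0∞) ^ j else 0)
      = r ^ i * (1 - r)⁻¹ := by
    intro i
    have hinj : Function.Injective (fun k : ℕ => i + k) := add_right_injective i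
    have hsupp : Function.support (fun j => if i ≤ j then (r:ℝ≥0∞) ^ j else 0)
        ⊆ Set.range (fun k : ℕ => i + k) := by
      intro j hj
      by_cases h : i ≤ j
      · exact ⟨j - i, by simpa using Nat.add_sub_cancel' h⟩
      · simp [h] at hj
    rw [← hinj.tsum_eq hsupp]
    simp only [Nat.le_add_right, if_true, pow_add]
    rw [ENNReal.tsum_mul_left, ENNReal.tsum_geometric]
  -- swap the order of summation and evaluate
  have hswap : ∑' j : ℕ, ∑ i ∈ Finset.range (j + 1), r ^ j * b i
      = (1 - r)⁻¹ * ∑' i : ℕ, r ^ i * b i := by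
    calc ∑' j : ℕ, ∑ i ∈ Finset.range (j + 1), r ^ j * b i
        = ∑' j : ℕ, ∑' i : ℕ, (if i ≤ j then r ^ j * b i else 0) := by
          exact tsum_congr hfin
      _ = ∑' i : ℕ, ∑' j : ℕ, (if i ≤ j then r ^ j * b i else 0) := ENNReal.tsum_comm
      _ = ∑' i : ℕ, ∑' j : ℕ, (if i ≤ j then (r:ℝ≥0∞) ^ j else 0) * b i := by
          refine tsum_congr fun i => tsum_congr fun j => ?_
          split <;> simp
      _ = ∑' i : ℕ, (∑' j : ℕ, (if i ≤ j then (r:ℝ≥0∞) ^ j else 0)) * b i := by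
          exact tsum_congr fun i => ENNReal.tsum_mul_right
      _ = ∑' i : ℕ, (1 - r)⁻¹ * (r ^ i * b i) := by
          refine tsum_congr fun i => ?_
          rw [hinner i]; ring
      _ = (1 - r)⁻¹ * ∑' i : ℕ, r ^ i * b i := ENNReal.tsum_mul_left
  -- identify r^i * b i with the target summand
  have hid : ∀ i : ℕ, (r:ℝ≥0∞) ^ i * b i
      = ENNReal.ofReal ((2:ℝ) ^ (σ * i) * a i ^ p) := by
    intro i
    rw [hrdef, hbdef, ← ENNReal.ofReal_pow ht0.le, ← ENNReal.ofReal_mul (pow_nonneg ht0.le i)]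
    congr 1
    have h3 : (t:ℝ) ^ i = (2:ℝ) ^ ((σ + τ) * (i:ℝ)) := by
      rw [htdef, ← Real.rpow_natCast ((2:ℝ) ^ (σ+τ)) i,
        ← Real.rpow_mul (by norm_num : (0:ℝ) ≤ 2)]
    rw [h3, ← mul_assoc, ← Real.rpow_add (by norm_num : (0:ℝ) < 2)]
    congr 2
    ring
  -- assemble
  have hconst : ENNReal.ofReal K * (1 - r)⁻¹ = ENNReal.ofReal (K * (1 - t)⁻¹) := by
    have h1r : (1:ℝ≥0∞) - r = ENNReal.ofReal (1 - t) := by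
      rw [ENNReal.ofReal_sub 1 ht0.le, ENNReal.ofReal_one]
    rw [ENNReal.ofReal_mul hK.le, h1r, ← ENNReal.ofReal_inv_of_pos (by linarith)]
  calc ∑' j : ℕ, ENNReal.ofReal ((2:ℝ) ^ (σ * j) *
        (∑ i ∈ Finset.range (j + 1), a i) ^ p)
      ≤ ENNReal.ofReal K * ∑' j : ℕ, ∑ i ∈ Finset.range (j + 1), r ^ j * b i := hstep1
    _ = ENNReal.ofReal K * ((1 - r)⁻¹ * ∑' i : ℕ, r ^ i * b i) := by rw [hswap]
    _ = (ENNReal.ofReal K * (1 - r)⁻¹) * ∑' i : ℕ, r ^ i * b i := by ring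
    _ = ENNReal.ofReal (K * (1 - t)⁻¹) * ∑' i : ℕ,
          ENNReal.ofReal ((2:ℝ) ^ (σ * i) * a i ^ p) := by
        rw [hconst, tsum_congr hid]
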